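/- arXiv:1202.0219 — 2 statements merged into one kernel-verified Lean document; each statement's English description precedes it below -/
import Mathlib

section
/- Summation formula: 𝔊_{n,q}^{(α)}(x,y) = ∑_{k=0}^n [n choose k]_q q^{(n-k)(n-k-1)/2} 𝔊_{k,q}^{(α)}(x,0) y^{n-k}, and also 𝔊_{n,q}^{(α)}(x,y) = ∑_{k=0}^n [n choose k]_q 𝔊_{k,q}^{(α)}(0,y) x^{n-k}. -/
open PowerSeries Finset

/-- The `q`-integer `[n]_q = 1 + q + ⋯ + q^(n-1)`. -/
noncomputable def qInt (q : ℂ) (n : ℕ) : ℂ := ∑ i ∈ Finset.range n, q ^ i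

/-- The `q`-factorial `[n]_q!`. -/
noncomputable def qFact (q : ℂ) : ℕ → ℂ
  | 0 => 1
  | n + 1 => qFact q n * qInt q (n + 1)

/-- The Gaussian (`q`-binomial) coefficient. -/
noncomputable def qBinom (q : ℂ) (n k : ℕ) : ℂ := qFact q n / (qFact q k * qFact q (n - k))

/-- The formal power series `e_q(tx) = ∑ x^n t^n/[n]_q!`. -/
noncomputable def qExpSeries (q : ℂ) (x : ℂ) : PowerSeries ℂ :=
  PowerSeries.mk fun n => x ^ n / qFact q n

/-- The formal power series `E_q(ty) = ∑ q^(n(n-1)/2) y^n t^n/[n]_q!`. -/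
noncomputable def qExpSeries' (q : ℂ) (y : ℂ) : PowerSeries ℂ :=
  PowerSeries.mk fun n => q ^ (n * (n - 1) / 2) * y ^ n / qFact q n

/-- Generating series `(2t/(e_q(t)+1))^α e_q(tx) E_q(ty)` of the `q`-Genocchi polynomials. -/
noncomputable def qGenocchiSeries (q : ℂ) (α : ℕ) (x y : ℂ) : PowerSeries ℂ :=
  (PowerSeries.C 2 * PowerSeries.X * (qExpSeries q 1 + 1)⁻¹) ^ α *
    qExpSeries q x * qExpSeries' q y

/-- The `q`-Genocchi polynomial `𝔊_{n,q}^{(α)}(x,y)`. -/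
noncomputable def qGenocchi (q : ℂ) (α : ℕ) (x y : ℂ) (n : ℕ) : ℂ :=
  qFact q n * PowerSeries.coeff n (qGenocchiSeries q α x y)

/-- The `q`-Bernoulli polynomial `𝔅_{n,q}(x,y)`, defined via
`(t/(e_q(t)-1)) e_q(tx) E_q(ty) = ∑ 𝔅_{n,q}(x,y) t^n/[n]_q!`
(note `t/(e_q(t)-1)` is the inverse of the series `∑ t^n/[n+1]_q!`). -/
noncomputable def qBernoulli (q : ℂ) (x y : ℂ) (n : ℕ) : ℂ :=
  qFact q n * PowerSeries.coeff n
    ((PowerSeries.mk fun k => (qFact q (k + 1))⁻¹)⁻¹ * qExpSeries q x * qExpSeries' q y)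

/-- The Gauss polynomial `(x+y)_q^n = ∑_k [n k]_q q^(k(k-1)/2) x^(n-k) y^k`. -/
noncomputable def qAddPow (q : ℂ) (x y : ℂ) (n : ℕ) : ℂ :=
  ∑ k ∈ Finset.range (n + 1), qBinom q n k * q ^ (k * (k - 1) / 2) * x ^ (n - k) * y ^ k

lemma qFact_ne_zero (q : ℂ) (hq : ∀ n : ℕ, qInt q (n + 1) ≠ 0) (n : ℕ) :
    qFact q n ≠ 0 := by
  induction n with
  | zero => simp [qFact]
  | succ k ih => exact mul_ne_zero ih (hq k)

lemma qExpSeries_zero (q : ℂ) : qExpSeries q 0 = 1 := by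
  ext n
  cases n with
  | zero => simp [qExpSeries, qFact]
  | succ k => simp [qExpSeries, PowerSeries.coeff_one]

lemma qExpSeries'_zero (q : ℂ) : qExpSeries' q 0 = 1 := by
  ext n
  cases n with
  | zero => simp [qExpSeries', qFact]
  | succ k => simp [qExpSeries', PowerSeries.coeff_one]

lemma coeff_mul_qExp' (q : ℂ) (f : PowerSeries ℂ) (y : ℂ) (n : ℕ) :
    PowerSeries.coeff n (f * qExpSeries' q y) =
      ∑ k ∈ Finset.range (n + 1),
        PowerSeries.coeff k f *
          (q ^ ((n - k) * (n - k - 1) / 2) * y ^ (n - k) / qFact q (n - k)) := by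
  rw [PowerSeries.coeff_mul, Finset.Nat.sum_antidiagonal_eq_sum_range_succ_mk]
  simp [qExpSeries']

lemma coeff_mul_qExp (q : ℂ) (f : PowerSeries ℂ) (x : ℂ) (n : ℕ) :
    PowerSeries.coeff n (f * qExpSeries q x) =
      ∑ k ∈ Finset.range (n + 1),
        PowerSeries.coeff k f * (x ^ (n - k) / qFact q (n - k)) := by
  rw [PowerSeries.coeff_mul, Finset.Nat.sum_antidiagonal_eq_sum_range_succ_mk]
  simp [qExpSeries]

/-- Summation formulas for the `q`-Genocchi polynomials of order `α`. -/
theorem qGenocchi_sum_formulas (q : ℂ) (hq : ∀ n : ℕ, qInt q (n + 1) ≠ 0)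
    (α n : ℕ) (x y : ℂ) :
    qGenocchi q α x y n =
      (∑ k ∈ Finset.range (n + 1),
        qBinom q n k * q ^ ((n - k) * (n - k - 1) / 2) * qGenocchi q α x 0 k * y ^ (n - k)) ∧
    qGenocchi q α x y n =
      ∑ k ∈ Finset.range (n + 1),
        qBinom q n k * qGenocchi q α 0 y k * x ^ (n - k) := by
  have hF := qFact_ne_zero q hq
  set S : PowerSeries ℂ :=
    (PowerSeries.C 2 * PowerSeries.X * (qExpSeries q 1 + 1)⁻¹) ^ α with hS
  constructor
  · have h0 : ∀ k, qGenocchi q α x 0 k =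
        qFact q k * PowerSeries.coeff k (S * qExpSeries q x) := by
      intro k
      simp [qGenocchi, qGenocchiSeries, qExpSeries'_zero, hS]
    have h1 : qGenocchiSeries q α x y = (S * qExpSeries q x) * qExpSeries' q y := by
      simp [qGenocchiSeries, hS, mul_assoc]
    rw [qGenocchi, h1, coeff_mul_qExp', Finset.mul_sum]
    refine Finset.sum_congr rfl fun k hk => ?_
    have hkn : k ≤ n := Nat.lt_succ_iff.mp (Finset.mem_range.mp hk)
    rw [h0 k, qBinom]
    field_simp [hF k, hF (n - k), hF n]
  · have h0 : ∀ k, qGenocchi q α 0 y k =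
        qFact q k * PowerSeries.coeff k (S * qExpSeries' q y) := by
      intro k
      simp [qGenocchi, qGenocchiSeries, qExpSeries_zero, hS]
    have h1 : qGenocchiSeries q α x y = (S * qExpSeries' q y) * qExpSeries q x := by
      simp [qGenocchiSeries, hS]; ring
    rw [qGenocchi, h1, coeff_mul_qExp, Finset.mul_sum]
    refine Finset.sum_congr rfl fun k hk => ?_
    have hkn : k ≤ n := Nat.lt_succ_iff.mp (Finset.mem_range.mp hk)
    rw [h0 k, qBinom]
    field_simp [hF k, hF (n - k), hF n]
end

section
/- Difference equation: 𝔊_{n,q}^{(α)}(1,y) + 𝔊_{n,q}^{(α)}(0,y) = 2[n]_q 𝔊_{n-1,q}^{(α-1)}(0,y) for n ≥ 1 and α ≥ 1. -/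
open PowerSeries Finset

lemma constCoeff_A (q : ℂ) : PowerSeries.constantCoeff (qExpSeries q 1 + 1) = 2 := by
  simp [qExpSeries, ← PowerSeries.coeff_zero_eq_constantCoeff, qFact]
  norm_num

/-- Difference equation: `𝔊_{n,q}^{(α)}(1,y) + 𝔊_{n,q}^{(α)}(0,y) = 2[n]_q 𝔊_{n-1,q}^{(α-1)}(0,y)`. -/
theorem qGenocchi_difference_eq (q : ℂ) (hq : ∀ n : ℕ, qInt q (n + 1) ≠ 0)
    (α n : ℕ) (hα : 1 ≤ α) (hn : 1 ≤ n) (y : ℂ) :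
    qGenocchi q α 1 y n + qGenocchi q α 0 y n =
      2 * qInt q n * qGenocchi q (α - 1) 0 y (n - 1) := by
  obtain ⟨β, rfl⟩ : ∃ β, α = β + 1 := ⟨α - 1, (Nat.succ_pred_eq_of_pos hα).symm⟩
  obtain ⟨m, rfl⟩ : ∃ m, n = m + 1 := ⟨n - 1, (Nat.succ_pred_eq_of_pos hn).symm⟩
  set A := qExpSeries q 1 + 1 with hA
  have hA0 : PowerSeries.constantCoeff A ≠ 0 := by
    rw [constCoeff_A]; norm_num
  have hinv : A⁻¹ * A = 1 := PowerSeries.inv_mul_cancel A hA0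
  have key : qGenocchiSeries q (β + 1) 1 y + qGenocchiSeries q (β + 1) 0 y
      = PowerSeries.C 2 * PowerSeries.X * qGenocchiSeries q β 0 y := by
    unfold qGenocchiSeries
    rw [qExpSeries_zero]
    rw [pow_succ]
    have : (PowerSeries.C 2 * PowerSeries.X * A⁻¹) ^ β *
          (PowerSeries.C 2 * PowerSeries.X * A⁻¹) * qExpSeries q 1 * qExpSeries' q y +
        (PowerSeries.C 2 * PowerSeries.X * A⁻¹) ^ β *
          (PowerSeries.C 2 * PowerSeries.X * A⁻¹) * 1 * qExpSeries' q y
      = (PowerSeries.C 2 * PowerSeries.X * A⁻¹) ^ β *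
          (PowerSeries.C 2 * PowerSeries.X) * (A⁻¹ * A) * qExpSeries' q y := by
      rw [hA]; ring
    rw [this, hinv]
    ring
  have hco : (PowerSeries.coeff (m + 1)) (PowerSeries.C 2 * PowerSeries.X *
      qGenocchiSeries q β 0 y)
      = 2 * PowerSeries.coeff m (qGenocchiSeries q β 0 y) := by
    rw [show PowerSeries.C 2 * PowerSeries.X * qGenocchiSeries q β 0 y
        = (PowerSeries.C 2 * qGenocchiSeries q β 0 y) * PowerSeries.X by ring,
      PowerSeries.coeff_succ_mul_X, PowerSeries.coeff_C_mul]
  simp only [qGenocchi, Nat.add_sub_cancel]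
  rw [← mul_add, ← map_add, key, hco, qFact]
  ring
end
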